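/- Let R be a commutative ring, let M and N be R-modules with N finitely generated, and let φ : M → N be an R-linear map. Then the set of prime ideals p of R such that the induced map of fibers M ⊗_R κ(p) → N ⊗_R κ(p) is surjective (where κ(p) denotes the residue field of R at p) is an open subset of the prime spectrum of R with the Zariski topology. Equivalently, the set of primes p at which the localized map M_p → N_p is surjective is open. -/
import Mathlib

/-- Let `R` be a commutative ring, `M` and `N` `R`-modules with `N` finitely generated,
and `φ : M → N` an `R`-linear map.  Then the set of primes `p` of `R` at which the
localized map `M_p → N_p` is surjective (equivalently, by Nakayama, the induced map of
fibers `M ⊗ κ(p) → N ⊗ κ(p)` is surjective) is open in `Spec R`. -/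
theorem isOpen_locus_surjective_localized_map
    (R M N : Type*) [CommRing R] [AddCommGroup M] [Module R M]
    [AddCommGroup N] [Module R N] [Module.Finite R N] (φ : M →ₗ[R] N) :
    IsOpen {p : PrimeSpectrum R |
      Function.Surjective (LocalizedModule.map p.asIdeal.primeCompl φ)} := by
  have key : {p : PrimeSpectrum R |
      Function.Surjective (LocalizedModule.map p.asIdeal.primeCompl φ)} =
      (Module.support R (N ⧸ LinearMap.range φ))ᶜ := by
    ext p
    have hex : Function.Exact (LocalizedModule.map p.asIdeal.primeCompl φ)
        (LocalizedModule.map p.asIdeal.primeCompl (LinearMap.range φ).mkQ) :=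
      LocalizedModule.map_exact p.asIdeal.primeCompl φ (LinearMap.range φ).mkQ
        (LinearMap.exact_map_mkQ_range φ)
    have hsurj : Function.Surjective
        (LocalizedModule.map p.asIdeal.primeCompl (LinearMap.range φ).mkQ) :=
      LocalizedModule.map_surjective _ _ (Submodule.mkQ_surjective _)
    simp only [Set.mem_setOf_eq, Set.mem_compl_iff, Module.notMem_support_iff]
    constructor
    · intro h
      constructor
      intro a b
      obtain ⟨a', rfl⟩ := hsurj a
      obtain ⟨b', rfl⟩ := hsurj b
      obtain ⟨a'', rfl⟩ := h a'
      obtain ⟨b'', rfl⟩ := h b'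
      rw [hex.apply_apply_eq_zero, hex.apply_apply_eq_zero]
    · intro h x
      have : LocalizedModule.map p.asIdeal.primeCompl (LinearMap.range φ).mkQ x = 0 :=
        Subsingleton.elim _ _
      exact (hex x).mp this
  rw [key]
  exact (Module.isClosed_support).isOpen_compl
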